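/- In the Heisenberg group 𝔥 = ℝ³, let d be the sub-Riemannian distance and let d_F be the Finsler distance associated with the norm ‖u‖ := √(u₁²+u₂²) + |u₃|. Then there exists r₀ > 0 such that d_F(p,q) = d(p,q) for every p, q ∈ ℝ³ with d(p,q) ≥ r₀. -/

import Mathlib

open MeasureTheory

/-- The Heisenberg group modeled on `ℝ³`. -/
abbrev Heis : Type := ℝ × ℝ × ℝ

/-- The Heisenberg Lie bracket `⁅(a,b,c),(a',b',c')⁆ = (0,0,ab'−a'b)`. -/
def hbracket (x y : Heis) : Heis := (0, 0, x.1 * y.2.1 - y.1 * x.2.1)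

/-- The Heisenberg group product `x∗y = x + y + (1/2)⁅x,y⁆`. -/
noncomputable def hmul (x y : Heis) : Heis := x + y + (2⁻¹ : ℝ) • hbracket x y

/-- The endpoint `E(u) = ∫₀¹ u + (1/2)∫₀¹ ⁅∫₀ᵗ u, u(t)⁆ dt` of the curve with control `u`. -/
noncomputable def hEndpoint (u : ℝ → Heis) : Heis :=
  (∫ t in (0:ℝ)..1, u t) +
    (2⁻¹ : ℝ) • ∫ t in (0:ℝ)..1, hbracket (∫ s in (0:ℝ)..t, u s) (u t)

/-- The sub-Riemannian distance on the Heisenberg group: infimum of `∫₀¹ √(u₁²+u₂²)` over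
`L¹` controls `u` with `u₃ = 0` a.e. steering `p` to `q`. -/
noncomputable def dH (p q : Heis) : ℝ :=
  sInf {l : ℝ | ∃ u : ℝ → Heis, IntervalIntegrable u volume 0 1 ∧
    (∀ᵐ t ∂(volume.restrict (Set.Icc (0:ℝ) 1)), (u t).2.2 = 0) ∧
    hEndpoint u = hmul (-p) q ∧
    l = ∫ t in (0:ℝ)..1, Real.sqrt ((u t).1 ^ 2 + (u t).2.1 ^ 2)}

/-- The Finsler distance associated with a norm `nrm` on `ℝ³`: infimum of `∫₀¹ nrm (u t)`
over `L¹` controls `u` steering `p` to `q`. -/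
noncomputable def dFin (nrm : Heis → ℝ) (p q : Heis) : ℝ :=
  sInf {l : ℝ | ∃ u : ℝ → Heis, IntervalIntegrable u volume 0 1 ∧
    hEndpoint u = hmul (-p) q ∧
    l = ∫ t in (0:ℝ)..1, nrm (u t)}

namespace S17
open intervalIntegral

noncomputable def f1 (x : Heis) : ℝ := Real.sqrt (x.1 ^ 2 + x.2.1 ^ 2)

variable {a b : ℝ} {u v : ℝ → Heis}

lemma IIfst {E F : Type*} [NormedAddCommGroup E] [NormedSpace ℝ E] [NormedAddCommGroup F]
    [NormedSpace ℝ F] {w : ℝ → E × F}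
    (h : IntervalIntegrable w volume a b) : IntervalIntegrable (fun t => (w t).1) volume a b :=
  ⟨h.1.fst, h.2.fst⟩

lemma IIsnd {E F : Type*} [NormedAddCommGroup E] [NormedSpace ℝ E] [NormedAddCommGroup F]
    [NormedSpace ℝ F] {w : ℝ → E × F}
    (h : IntervalIntegrable w volume a b) : IntervalIntegrable (fun t => (w t).2) volume a b :=
  ⟨h.1.snd, h.2.snd⟩

lemma II1 (h : IntervalIntegrable u volume a b) :
    IntervalIntegrable (fun t => (u t).1) volume a b := IIfst h
lemma II2 (h : IntervalIntegrable u volume a b) :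
    IntervalIntegrable (fun t => (u t).2.1) volume a b := IIfst (IIsnd h)
lemma II3 (h : IntervalIntegrable u volume a b) :
    IntervalIntegrable (fun t => (u t).2.2) volume a b := IIsnd (IIsnd h)

lemma IIprod {E F : Type*} [NormedAddCommGroup E] [NormedSpace ℝ E] [NormedAddCommGroup F]
    [NormedSpace ℝ F] {f : ℝ → E} {g : ℝ → F} (hf : IntervalIntegrable f volume a b)
    (hg : IntervalIntegrable g volume a b) :
    IntervalIntegrable (fun t => (f t, g t)) volume a b :=
  ⟨hf.1.prodMk hg.1, hf.2.prodMk hg.2⟩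

lemma II_mk {f g h : ℝ → ℝ} (hf : IntervalIntegrable f volume a b)
    (hg : IntervalIntegrable g volume a b) (hh : IntervalIntegrable h volume a b) :
    IntervalIntegrable (fun t => ((f t, g t, h t) : Heis)) volume a b :=
  IIprod hf (IIprod hg hh)

lemma intervalIntegral_prod {E F : Type*} [NormedAddCommGroup E] [NormedSpace ℝ E]
    [CompleteSpace E] [NormedAddCommGroup F] [NormedSpace ℝ F] [CompleteSpace F]
    {w : ℝ → E × F} (h : IntervalIntegrable w volume a b) :
    ∫ t in a..b, w t = (∫ t in a..b, (w t).1, ∫ t in a..b, (w t).2) := by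
  refine Prod.ext ?_ ?_
  · exact ((ContinuousLinearMap.fst ℝ E F).intervalIntegral_comp_comm h).symm
  · exact ((ContinuousLinearMap.snd ℝ E F).intervalIntegral_comp_comm h).symm

lemma heis_integral (h : IntervalIntegrable u volume a b) :
    ∫ t in a..b, u t
      = (∫ t in a..b, (u t).1, ∫ t in a..b, (u t).2.1, ∫ t in a..b, (u t).2.2) := by
  rw [intervalIntegral_prod h]
  exact congrArg _ (intervalIntegral_prod (IIsnd h))

noncomputable def P1 (u : ℝ → Heis) (t : ℝ) : ℝ := ∫ s in (0:ℝ)..t, (u s).1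
noncomputable def P2 (u : ℝ → Heis) (t : ℝ) : ℝ := ∫ s in (0:ℝ)..t, (u s).2.1

noncomputable def aInt (u : ℝ → Heis) (t : ℝ) : ℝ := P1 u t * (u t).2.1 - (u t).1 * P2 u t

lemma primitive_comp (h : IntervalIntegrable u volume 0 1) {t : ℝ} (ht : t ∈ Set.Icc (0:ℝ) 1) :
    ∫ s in (0:ℝ)..t, u s = (P1 u t, P2 u t, ∫ s in (0:ℝ)..t, (u s).2.2) := by
  have hsub : Set.uIcc (0:ℝ) t ⊆ Set.uIcc (0:ℝ) 1 := by
    rw [Set.uIcc_of_le ht.1, Set.uIcc_of_le (by norm_num : (0:ℝ) ≤ 1)]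
    exact Set.Icc_subset_Icc le_rfl ht.2
  exact heis_integral (h.mono_set hsub)

lemma contOn_P1 (h : IntervalIntegrable u volume 0 1) :
    ContinuousOn (P1 u) (Set.uIcc (0:ℝ) 1) :=
  intervalIntegral.continuousOn_primitive_interval ((intervalIntegrable_iff' (f := fun t => (u t).1) (μ := volume)).1 (II1 h))

lemma contOn_P2 (h : IntervalIntegrable u volume 0 1) :
    ContinuousOn (P2 u) (Set.uIcc (0:ℝ) 1) :=
  intervalIntegral.continuousOn_primitive_interval ((intervalIntegrable_iff' (f := fun t => (u t).2.1) (μ := volume)).1 (II2 h))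

lemma aInt_II (h : IntervalIntegrable u volume 0 1) :
    IntervalIntegrable (aInt u) volume 0 1 := by
  unfold aInt
  exact ((II2 h).continuousOn_mul (contOn_P1 h)).sub ((II1 h).mul_continuousOn (contOn_P2 h))

lemma hEndpoint_eq (h : IntervalIntegrable u volume 0 1) :
    hEndpoint u = (∫ t in (0:ℝ)..1, (u t).1, ∫ t in (0:ℝ)..1, (u t).2.1,
      (∫ t in (0:ℝ)..1, (u t).2.2) + 2⁻¹ * ∫ t in (0:ℝ)..1, aInt u t) := by
  have hcongr : ∫ t in (0:ℝ)..1, hbracket (∫ s in (0:ℝ)..t, u s) (u t)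
      = ∫ t in (0:ℝ)..1, (((0:ℝ), (0:ℝ), aInt u t) : Heis) := by
    apply intervalIntegral.integral_congr
    intro t ht
    rw [Set.uIcc_of_le (by norm_num : (0:ℝ) ≤ 1)] at ht
    show hbracket (∫ s in (0:ℝ)..t, u s) (u t) = _
    rw [primitive_comp h ht]
    rfl
  rw [hEndpoint, hcongr, heis_integral h,
    heis_integral (II_mk intervalIntegrable_const intervalIntegrable_const (aInt_II h))]
  simp only [intervalIntegral.integral_const, smul_zero, sub_zero, smul_eq_mul, mul_zero]
  refine Prod.ext (by simp) (Prod.ext (by simp) (by simp [smul_eq_mul]))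

lemma sqrt_le_abs_add_abs (x y : ℝ) : Real.sqrt (x ^ 2 + y ^ 2) ≤ |x| + |y| := by
  rw [show x ^ 2 + y ^ 2 = |x| ^ 2 + |y| ^ 2 by rw [sq_abs, sq_abs]]
  calc Real.sqrt (|x| ^ 2 + |y| ^ 2) ≤ Real.sqrt ((|x| + |y|) ^ 2) := by
        apply Real.sqrt_le_sqrt; nlinarith [abs_nonneg x, abs_nonneg y]
    _ = |x| + |y| := Real.sqrt_sq (by positivity)

lemma f1_II (h : IntervalIntegrable u volume a b) :
    IntervalIntegrable (fun t => f1 (u t)) volume a b := by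
  apply ((II1 h).abs.add (II2 h).abs).mono_fun'
  · have m1 := (II1 h).def'.aestronglyMeasurable
    have m2 := (II2 h).def'.aestronglyMeasurable
    have := Real.continuous_sqrt.comp_aestronglyMeasurable (((m1.mul m1).add (m2.mul m2)))
    simpa [f1, pow_two, Function.comp] using this
  · apply Filter.Eventually.of_forall
    intro t
    simp only [Real.norm_eq_abs, f1]
    rw [abs_of_nonneg (Real.sqrt_nonneg _)]
    exact sqrt_le_abs_add_abs _ _

end S17

section
variable {E : Type*} [NormedAddCommGroup E] {a b : ℝ} {f g : ℝ → E}

lemma II_congr (hf : IntervalIntegrable f volume a b)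
    (h : ∀ t ∈ Set.uIoc a b, f t = g t) : IntervalIntegrable g volume a b := by
  rw [intervalIntegrable_iff] at hf ⊢
  exact hf.congr_fun h measurableSet_uIoc

end

section
variable {f g : ℝ → ℝ}

/-- scalar concatenation -/
noncomputable def catR (f g : ℝ → ℝ) : ℝ → ℝ :=
  fun t => if t ≤ 1/2 then 2 * f (2*t) else 2 * g (2*t - 1)

lemma piece1_II (hf : IntervalIntegrable f volume 0 1) :
    IntervalIntegrable (fun t => 2 * f (2*t)) volume 0 (1/2) := by
  have := (hf.comp_mul_left (c := 2)).const_mul 2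
  norm_num at this
  exact this

lemma piece2_II (hg : IntervalIntegrable g volume 0 1) :
    IntervalIntegrable (fun t => 2 * g (2*t - 1)) volume (1/2) 1 := by
  have h1 : IntervalIntegrable (fun x => g (x + -1)) volume 1 2 := by
    have := hg.comp_add_right (-1); norm_num at this; exact this
  have h2 := (h1.comp_mul_left (c := 2)).const_mul 2
  norm_num at h2
  have : (fun x => 2 * g (2*x + -1)) = (fun x => 2 * g (2*x - 1)) := by
    funext x; ring_nf
  rwa [this] at h2

lemma catR_II_left (hf : IntervalIntegrable f volume 0 1) :
    IntervalIntegrable (catR f g) volume 0 (1/2) := by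
  apply II_congr (piece1_II hf)
  intro t ht
  rw [Set.uIoc_of_le (by norm_num : (0:ℝ) ≤ 1/2)] at ht
  have h2 : t ≤ 1/2 := ht.2
  simp only [catR, if_pos h2]

lemma catR_II_right (hg : IntervalIntegrable g volume 0 1) :
    IntervalIntegrable (catR f g) volume (1/2) 1 := by
  apply II_congr (piece2_II hg)
  intro t ht
  rw [Set.uIoc_of_le (by norm_num : (1:ℝ)/2 ≤ 1)] at ht
  simp only [catR, if_neg (not_le.2 ht.1)]

lemma catR_II (hf : IntervalIntegrable f volume 0 1) (hg : IntervalIntegrable g volume 0 1) :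
    IntervalIntegrable (catR f g) volume 0 1 :=
  (catR_II_left hf).trans (catR_II_right hg)

/-- change of variables for the first piece, any endpoints -/
lemma cov1 (f : ℝ → ℝ) (t : ℝ) :
    ∫ s in (0:ℝ)..t, 2 * f (2*s) = ∫ s in (0:ℝ)..2*t, f s := by
  have h := intervalIntegral.smul_integral_comp_mul_left (a := (0:ℝ)) (b := t) f 2
  rw [smul_eq_mul] at h
  rw [intervalIntegral.integral_const_mul, h]
  norm_num

lemma cov2 (g : ℝ → ℝ) (t : ℝ) :
    ∫ s in (1/2:ℝ)..t, 2 * g (2*s - 1) = ∫ s in (0:ℝ)..2*t-1, g s := by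
  have h := intervalIntegral.smul_integral_comp_mul_add (a := (1/2:ℝ)) (b := t) g 2 (-1)
  rw [smul_eq_mul] at h
  have e0 : 2*(1/2:ℝ) + -1 = 0 := by norm_num
  have e1 : 2*t + -1 = 2*t - 1 := by ring
  rw [e0, e1] at h
  have e2 : (fun s => 2 * g (2*s - 1)) = fun s => 2 * g (2*s + -1) := by
    funext s; rw [sub_eq_add_neg]
  rw [e2, intervalIntegral.integral_const_mul, h]
end

section
variable {f g : ℝ → ℝ}

lemma catR_int_left (hf : IntervalIntegrable f volume 0 1) :
    ∫ t in (0:ℝ)..(1/2), catR f g t = ∫ t in (0:ℝ)..1, f t := by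
  have : ∫ t in (0:ℝ)..(1/2), catR f g t = ∫ t in (0:ℝ)..(1/2), 2 * f (2*t) := by
    apply intervalIntegral.integral_congr
    intro t ht
    rw [Set.uIcc_of_le (by norm_num : (0:ℝ) ≤ 1/2)] at ht
    simp only [catR, if_pos ht.2]
  rw [this, cov1]
  norm_num

lemma catR_int_right_gen (hg : IntervalIntegrable g volume 0 1) {t : ℝ} (ht : 1/2 ≤ t) :
    ∫ s in (1/2:ℝ)..t, catR f g s = ∫ s in (0:ℝ)..2*t-1, g s := by
  have : ∫ s in (1/2:ℝ)..t, catR f g s = ∫ s in (1/2:ℝ)..t, 2 * g (2*s-1) := by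
    apply intervalIntegral.integral_congr_ae
    apply Filter.Eventually.of_forall
    intro s hs
    rw [Set.uIoc_of_le ht] at hs
    simp only [catR, if_neg (not_le.2 hs.1)]
  rw [this, cov2]

lemma catR_int (hf : IntervalIntegrable f volume 0 1) (hg : IntervalIntegrable g volume 0 1) :
    ∫ t in (0:ℝ)..1, catR f g t = (∫ t in (0:ℝ)..1, f t) + ∫ t in (0:ℝ)..1, g t := by
  rw [← intervalIntegral.integral_add_adjacent_intervals (catR_II_left hf) (catR_II_right hg),
    catR_int_left hf, catR_int_right_gen hg (by norm_num : (1:ℝ)/2 ≤ 1)]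
  norm_num

lemma catR_P0 (hf : IntervalIntegrable f volume 0 1) {t : ℝ} (ht : t ∈ Set.Icc (0:ℝ) (1/2)) :
    ∫ s in (0:ℝ)..t, catR f g s = ∫ s in (0:ℝ)..2*t, f s := by
  have : ∫ s in (0:ℝ)..t, catR f g s = ∫ s in (0:ℝ)..t, 2 * f (2*s) := by
    apply intervalIntegral.integral_congr
    intro s hs
    rw [Set.uIcc_of_le ht.1] at hs
    simp only [catR, if_pos (le_trans hs.2 ht.2)]
  rw [this, cov1]

lemma catR_P1 (hf : IntervalIntegrable f volume 0 1) (hg : IntervalIntegrable g volume 0 1)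
    {t : ℝ} (ht : t ∈ Set.Icc (1/2:ℝ) 1) :
    ∫ s in (0:ℝ)..t, catR f g s = (∫ s in (0:ℝ)..1, f s) + ∫ s in (0:ℝ)..2*t-1, g s := by
  have hsub : Set.uIcc (1/2:ℝ) t ⊆ Set.uIcc (1/2:ℝ) 1 := by
    rw [Set.uIcc_of_le ht.1, Set.uIcc_of_le (by norm_num : (1:ℝ)/2 ≤ 1)]
    exact Set.Icc_subset_Icc le_rfl ht.2
  rw [← intervalIntegral.integral_add_adjacent_intervals (catR_II_left hf)
    ((catR_II_right (f := f) hg).mono_set hsub), catR_int_left hf,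
    catR_int_right_gen hg ht.1]

end

section
variable {f : ℝ → ℝ} {τ : ℝ}

lemma spR1_int (f : ℝ → ℝ) (τ t : ℝ) :
    ∫ s in (0:ℝ)..t, τ * f (τ*s) = ∫ s in (0:ℝ)..τ*t, f s := by
  have h := intervalIntegral.smul_integral_comp_mul_left (a := (0:ℝ)) (b := t) f τ
  rw [smul_eq_mul] at h
  rw [intervalIntegral.integral_const_mul, h, mul_zero]

lemma spR2_int (f : ℝ → ℝ) (τ t : ℝ) :
    ∫ s in (0:ℝ)..t, (1-τ) * f (τ + (1-τ)*s) = ∫ s in τ..(τ + (1-τ)*t), f s := by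
  have h := intervalIntegral.smul_integral_comp_add_mul (a := (0:ℝ)) (b := t) f (1-τ) τ
  rw [smul_eq_mul] at h
  rw [intervalIntegral.integral_const_mul, h, mul_zero, add_zero]

lemma uIcc_sub_left (h0 : 0 ≤ τ) (h1 : τ ≤ 1) : Set.uIcc (0:ℝ) τ ⊆ Set.uIcc (0:ℝ) 1 := by
  rw [Set.uIcc_of_le h0, Set.uIcc_of_le (by norm_num : (0:ℝ) ≤ 1)]
  exact Set.Icc_subset_Icc le_rfl h1

lemma uIcc_sub_right (h0 : 0 ≤ τ) (h1 : τ ≤ 1) : Set.uIcc τ (1:ℝ) ⊆ Set.uIcc (0:ℝ) 1 := by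
  rw [Set.uIcc_of_le h1, Set.uIcc_of_le (by norm_num : (0:ℝ) ≤ 1)]
  exact Set.Icc_subset_Icc h0 le_rfl

lemma spR1_II (hf : IntervalIntegrable f volume 0 1) (h0 : 0 ≤ τ) (h1 : τ ≤ 1) :
    IntervalIntegrable (fun s => τ * f (τ*s)) volume 0 1 := by
  by_cases hτ : τ = 0
  · simp [hτ]
  · have h2 := ((hf.mono_set (uIcc_sub_left h0 h1)).comp_mul_left (c := τ)).const_mul τ
    rwa [zero_div, div_self hτ] at h2

lemma spR2_II (hf : IntervalIntegrable f volume 0 1) (h0 : 0 ≤ τ) (h1 : τ ≤ 1) :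
    IntervalIntegrable (fun s => (1-τ) * f (τ + (1-τ)*s)) volume 0 1 := by
  by_cases hτ : (1:ℝ) - τ = 0
  · simp [hτ]
  · have h2 := hf.mono_set (uIcc_sub_right h0 h1)
    have h3 := h2.comp_add_left τ
    rw [sub_self] at h3
    have h4 := (h3.comp_mul_left (c := 1-τ)).const_mul (1-τ)
    rwa [zero_div, div_self hτ] at h4

end

namespace S17
open intervalIntegral
variable {u v : ℝ → Heis}

lemma hmul_def (x y : Heis) : hmul x y
    = (x.1 + y.1, x.2.1 + y.2.1, x.2.2 + y.2.2 + 2⁻¹*(x.1*y.2.1 - y.1*x.2.1)) := by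
  simp [hmul, hbracket, Prod.ext_iff]

noncomputable def cat (u v : ℝ → Heis) : ℝ → Heis :=
  fun t => if t ≤ 1/2 then (2:ℝ) • u (2*t) else (2:ℝ) • v (2*t - 1)

lemma cat_eq (u v : ℝ → Heis) : cat u v = fun t =>
    ((catR (fun s => (u s).1) (fun s => (v s).1) t,
      catR (fun s => (u s).2.1) (fun s => (v s).2.1) t,
      catR (fun s => (u s).2.2) (fun s => (v s).2.2) t) : Heis) := by
  funext t
  unfold cat catR
  split_ifs <;> simp [Prod.ext_iff, smul_eq_mul]

lemma cat_II (hu : IntervalIntegrable u volume 0 1) (hv : IntervalIntegrable v volume 0 1) :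
    IntervalIntegrable (cat u v) volume 0 1 := by
  rw [cat_eq]
  exact II_mk (catR_II (II1 hu) (II1 hv)) (catR_II (II2 hu) (II2 hv))
    (catR_II (II3 hu) (II3 hv))

lemma P1_cat (u v : ℝ → Heis) (t : ℝ) :
    P1 (cat u v) t = ∫ s in (0:ℝ)..t, catR (fun s => (u s).1) (fun s => (v s).1) s := by
  unfold P1; rw [cat_eq]

lemma P2_cat (u v : ℝ → Heis) (t : ℝ) :
    P2 (cat u v) t = ∫ s in (0:ℝ)..t, catR (fun s => (u s).2.1) (fun s => (v s).2.1) s := by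
  unfold P2; rw [cat_eq]

lemma aInt_cat (hu : IntervalIntegrable u volume 0 1) (hv : IntervalIntegrable v volume 0 1) :
    ∀ t ∈ Set.Icc (0:ℝ) 1, aInt (cat u v) t
      = catR (aInt u) (fun s => aInt v s + ((∫ s in (0:ℝ)..1, (u s).1) * (v s).2.1
          - (v s).1 * ∫ s in (0:ℝ)..1, (u s).2.1)) t := by
  intro t ht
  by_cases h : t ≤ 1/2
  · have ht' : t ∈ Set.Icc (0:ℝ) (1/2) := ⟨ht.1, h⟩
    have hP1 : P1 (cat u v) t = P1 u (2*t) := by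
      rw [P1_cat, catR_P0 (II1 hu) ht']; rfl
    have hP2 : P2 (cat u v) t = P2 u (2*t) := by
      rw [P2_cat, catR_P0 (II2 hu) ht']; rfl
    have hcv : cat u v t = (2:ℝ) • u (2*t) := by simp only [cat, if_pos h]
    simp only [aInt, catR, if_pos h, hP1, hP2, hcv, Prod.smul_fst, Prod.smul_snd, smul_eq_mul]
    ring
  · have ht' : t ∈ Set.Icc (1/2:ℝ) 1 := ⟨le_of_not_ge h, ht.2⟩
    have hP1 : P1 (cat u v) t = (∫ s in (0:ℝ)..1, (u s).1) + P1 v (2*t-1) := by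
      rw [P1_cat, catR_P1 (II1 hu) (II1 hv) ht']; rfl
    have hP2 : P2 (cat u v) t = (∫ s in (0:ℝ)..1, (u s).2.1) + P2 v (2*t-1) := by
      rw [P2_cat, catR_P1 (II2 hu) (II2 hv) ht']; rfl
    have hcv : cat u v t = (2:ℝ) • v (2*t-1) := by simp only [cat, if_neg h]
    simp only [aInt, catR, if_neg h, hP1, hP2, hcv, Prod.smul_fst, Prod.smul_snd, smul_eq_mul]
    ring

lemma cat_hE (hu : IntervalIntegrable u volume 0 1) (hv : IntervalIntegrable v volume 0 1) :
    hEndpoint (cat u v) = hmul (hEndpoint u) (hEndpoint v) := by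
  have e1 : ∫ t in (0:ℝ)..1, (cat u v t).1
      = (∫ t in (0:ℝ)..1, (u t).1) + ∫ t in (0:ℝ)..1, (v t).1 := by
    rw [cat_eq]; exact catR_int (II1 hu) (II1 hv)
  have e2 : ∫ t in (0:ℝ)..1, (cat u v t).2.1
      = (∫ t in (0:ℝ)..1, (u t).2.1) + ∫ t in (0:ℝ)..1, (v t).2.1 := by
    rw [cat_eq]; exact catR_int (II2 hu) (II2 hv)
  have e3 : ∫ t in (0:ℝ)..1, (cat u v t).2.2
      = (∫ t in (0:ℝ)..1, (u t).2.2) + ∫ t in (0:ℝ)..1, (v t).2.2 := by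
    rw [cat_eq]; exact catR_int (II3 hu) (II3 hv)
  have ea : ∫ t in (0:ℝ)..1, aInt (cat u v) t
      = (∫ t in (0:ℝ)..1, aInt u t) + ((∫ t in (0:ℝ)..1, aInt v t)
        + ((∫ s in (0:ℝ)..1, (u s).1) * (∫ s in (0:ℝ)..1, (v s).2.1)
          - (∫ s in (0:ℝ)..1, (v s).1) * ∫ s in (0:ℝ)..1, (u s).2.1)) := by
    have hcongr : ∫ t in (0:ℝ)..1, aInt (cat u v) t
        = ∫ t in (0:ℝ)..1, catR (aInt u) (fun s => aInt v s
          + ((∫ s in (0:ℝ)..1, (u s).1) * (v s).2.1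
            - (v s).1 * ∫ s in (0:ℝ)..1, (u s).2.1)) t := by
      apply intervalIntegral.integral_congr
      intro t ht
      rw [Set.uIcc_of_le (by norm_num : (0:ℝ) ≤ 1)] at ht
      exact aInt_cat hu hv t ht
    have hII2 : IntervalIntegrable (fun s => (∫ s in (0:ℝ)..1, (u s).1) * (v s).2.1
        - (v s).1 * ∫ s in (0:ℝ)..1, (u s).2.1) volume 0 1 :=
      ((II2 hv).const_mul _).sub ((II1 hv).mul_const _)
    rw [hcongr, catR_int (aInt_II hu) ((aInt_II hv).add hII2),
      intervalIntegral.integral_add (aInt_II hv) hII2,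
      intervalIntegral.integral_sub ((II2 hv).const_mul _) ((II1 hv).mul_const _),
      intervalIntegral.integral_const_mul, intervalIntegral.integral_mul_const]
  rw [hEndpoint_eq (cat_II hu hv), hEndpoint_eq hu, hEndpoint_eq hv, hmul_def, e1, e2, e3, ea]
  simp only [Prod.ext_iff]
  refine ⟨trivial, trivial, by ring⟩

end S17

namespace S17
open intervalIntegral
variable {u v : ℝ → Heis} {τ : ℝ}

noncomputable def sp1 (τ : ℝ) (u : ℝ → Heis) : ℝ → Heis := fun s => τ • u (τ*s)
noncomputable def sp2 (τ : ℝ) (u : ℝ → Heis) : ℝ → Heis := fun s => (1-τ) • u (τ + (1-τ)*s)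

lemma sp1_eq (τ : ℝ) (u : ℝ → Heis) : sp1 τ u = fun s =>
    ((τ*(u (τ*s)).1, τ*(u (τ*s)).2.1, τ*(u (τ*s)).2.2) : Heis) := by
  funext s; simp [sp1, Prod.ext_iff, smul_eq_mul]

lemma sp2_eq (τ : ℝ) (u : ℝ → Heis) : sp2 τ u = fun s =>
    (((1-τ)*(u (τ+(1-τ)*s)).1, (1-τ)*(u (τ+(1-τ)*s)).2.1, (1-τ)*(u (τ+(1-τ)*s)).2.2) : Heis) := by
  funext s; simp [sp2, Prod.ext_iff, smul_eq_mul]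

lemma sp1_II (hu : IntervalIntegrable u volume 0 1) (h0 : 0 ≤ τ) (h1 : τ ≤ 1) :
    IntervalIntegrable (sp1 τ u) volume 0 1 := by
  rw [sp1_eq]
  exact II_mk (spR1_II (f := fun r => (u r).1) (II1 hu) h0 h1)
    (spR1_II (f := fun r => (u r).2.1) (II2 hu) h0 h1)
    (spR1_II (f := fun r => (u r).2.2) (II3 hu) h0 h1)

lemma sp2_II (hu : IntervalIntegrable u volume 0 1) (h0 : 0 ≤ τ) (h1 : τ ≤ 1) :
    IntervalIntegrable (sp2 τ u) volume 0 1 := by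
  rw [sp2_eq]
  exact II_mk (spR2_II (f := fun r => (u r).1) (II1 hu) h0 h1)
    (spR2_II (f := fun r => (u r).2.1) (II2 hu) h0 h1)
    (spR2_II (f := fun r => (u r).2.2) (II3 hu) h0 h1)

lemma P1_sp1 (t : ℝ) : P1 (sp1 τ u) t = P1 u (τ*t) := by
  rw [P1, sp1_eq]
  show (∫ s in (0:ℝ)..t, τ * (u (τ*s)).1) = _
  exact spR1_int (fun r => (u r).1) τ t

lemma P2_sp1 (t : ℝ) : P2 (sp1 τ u) t = P2 u (τ*t) := by
  rw [P2, sp1_eq]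
  show (∫ s in (0:ℝ)..t, τ * (u (τ*s)).2.1) = _
  exact spR1_int (fun r => (u r).2.1) τ t

lemma P1_sp2 (hu : IntervalIntegrable u volume 0 1) (h0 : 0 ≤ τ) (h1 : τ ≤ 1)
    {t : ℝ} (ht : t ∈ Set.Icc (0:ℝ) 1) : P1 (sp2 τ u) t = P1 u (τ+(1-τ)*t) - P1 u τ := by
  rw [P1, sp2_eq]
  have h2 : (∫ s in (0:ℝ)..t, (1-τ)*(u (τ+(1-τ)*s)).1) = ∫ s in τ..(τ+(1-τ)*t), (u s).1 :=
    spR2_int (fun r => (u r).1) τ t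
  have hx : τ + (1-τ)*t ∈ Set.Icc (0:ℝ) 1 := by
    constructor <;> nlinarith [ht.1, ht.2]
  rw [show (fun s => (((1-τ)*(u (τ+(1-τ)*s)).1, (1-τ)*(u (τ+(1-τ)*s)).2.1,
      (1-τ)*(u (τ+(1-τ)*s)).2.2) : Heis)) = fun s => (((1-τ)*(u (τ+(1-τ)*s)).1 : ℝ),
      ((1-τ)*(u (τ+(1-τ)*s)).2.1, (1-τ)*(u (τ+(1-τ)*s)).2.2)) from rfl]
  show (∫ s in (0:ℝ)..t, (1-τ)*(u (τ+(1-τ)*s)).1) = _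
  rw [h2, eq_sub_iff_add_eq]
  rw [P1, P1, add_comm]
  exact intervalIntegral.integral_add_adjacent_intervals
    ((II1 hu).mono_set (uIcc_sub_left h0 h1))
    ((II1 hu).mono_set (by
      rw [Set.uIcc_of_le (by nlinarith [ht.1] : τ ≤ τ + (1-τ)*t),
        Set.uIcc_of_le (by norm_num : (0:ℝ) ≤ 1)]
      exact Set.Icc_subset_Icc h0 hx.2))

lemma P2_sp2 (hu : IntervalIntegrable u volume 0 1) (h0 : 0 ≤ τ) (h1 : τ ≤ 1)
    {t : ℝ} (ht : t ∈ Set.Icc (0:ℝ) 1) : P2 (sp2 τ u) t = P2 u (τ+(1-τ)*t) - P2 u τ := by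
  rw [P2, sp2_eq]
  have h2 : (∫ s in (0:ℝ)..t, (1-τ)*(u (τ+(1-τ)*s)).2.1) = ∫ s in τ..(τ+(1-τ)*t), (u s).2.1 :=
    spR2_int (fun r => (u r).2.1) τ t
  have hx : τ + (1-τ)*t ∈ Set.Icc (0:ℝ) 1 := by
    constructor <;> nlinarith [ht.1, ht.2]
  show (∫ s in (0:ℝ)..t, (1-τ)*(u (τ+(1-τ)*s)).2.1) = _
  rw [h2, eq_sub_iff_add_eq]
  rw [P2, P2, add_comm]
  exact intervalIntegral.integral_add_adjacent_intervals
    ((II2 hu).mono_set (uIcc_sub_left h0 h1))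
    ((II2 hu).mono_set (by
      rw [Set.uIcc_of_le (by nlinarith [ht.1] : τ ≤ τ + (1-τ)*t),
        Set.uIcc_of_le (by norm_num : (0:ℝ) ≤ 1)]
      exact Set.Icc_subset_Icc h0 hx.2))

end S17

namespace S17
open intervalIntegral
variable {u : ℝ → Heis} {τ : ℝ}

lemma aInt_sp1 (t : ℝ) : aInt (sp1 τ u) t = τ * aInt u (τ*t) := by
  have h1 : (sp1 τ u t).1 = τ * (u (τ*t)).1 := by simp [sp1, smul_eq_mul]
  have h2 : (sp1 τ u t).2.1 = τ * (u (τ*t)).2.1 := by simp [sp1, smul_eq_mul]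
  simp only [aInt, P1_sp1, P2_sp1, h1, h2]
  ring

lemma Ia_sp1 : ∫ t in (0:ℝ)..1, aInt (sp1 τ u) t = ∫ t in (0:ℝ)..τ, aInt u t := by
  have : (fun t => aInt (sp1 τ u) t) = fun t => τ * aInt u (τ*t) := funext aInt_sp1
  rw [this]
  have h := spR1_int (aInt u) τ 1
  rwa [mul_one] at h

lemma aInt_sp2 (hu : IntervalIntegrable u volume 0 1) (h0 : 0 ≤ τ) (h1 : τ ≤ 1)
    {t : ℝ} (ht : t ∈ Set.Icc (0:ℝ) 1) :
    aInt (sp2 τ u) t = (1-τ) * (aInt u (τ+(1-τ)*t)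
      - P1 u τ * (u (τ+(1-τ)*t)).2.1 + P2 u τ * (u (τ+(1-τ)*t)).1) := by
  have h2 : (sp2 τ u t).1 = (1-τ) * (u (τ+(1-τ)*t)).1 := by simp [sp2, smul_eq_mul]
  have h3 : (sp2 τ u t).2.1 = (1-τ) * (u (τ+(1-τ)*t)).2.1 := by simp [sp2, smul_eq_mul]
  simp only [aInt, P1_sp2 hu h0 h1 ht, P2_sp2 hu h0 h1 ht, h2, h3]
  ring

lemma Ia_sp2 (hu : IntervalIntegrable u volume 0 1) (h0 : 0 ≤ τ) (h1 : τ ≤ 1) :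
    ∫ t in (0:ℝ)..1, aInt (sp2 τ u) t
      = ∫ s in τ..1, (aInt u s - P1 u τ * (u s).2.1 + P2 u τ * (u s).1) := by
  have hc : ∫ t in (0:ℝ)..1, aInt (sp2 τ u) t
      = ∫ t in (0:ℝ)..1, (1-τ) * ((fun s => aInt u s - P1 u τ * (u s).2.1
          + P2 u τ * (u s).1) (τ+(1-τ)*t)) := by
    apply intervalIntegral.integral_congr
    intro t ht
    rw [Set.uIcc_of_le (by norm_num : (0:ℝ) ≤ 1)] at ht
    exact aInt_sp2 hu h0 h1 ht
  rw [hc]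
  have h := spR2_int (fun s => aInt u s - P1 u τ * (u s).2.1 + P2 u τ * (u s).1) τ 1
  rwa [mul_one, show τ + (1-τ) = 1 by ring] at h

lemma sp_hE (hu : IntervalIntegrable u volume 0 1) (h0 : 0 ≤ τ) (h1 : τ ≤ 1) :
    hmul (hEndpoint (sp1 τ u)) (hEndpoint (sp2 τ u)) = hEndpoint u := by
  have m1 : IntervalIntegrable (fun t => (u t).1) volume 0 τ := (II1 hu).mono_set (uIcc_sub_left h0 h1)
  have m1' : IntervalIntegrable (fun t => (u t).1) volume τ 1 := (II1 hu).mono_set (uIcc_sub_right h0 h1)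
  have m2 : IntervalIntegrable (fun t => (u t).2.1) volume 0 τ := (II2 hu).mono_set (uIcc_sub_left h0 h1)
  have m2' : IntervalIntegrable (fun t => (u t).2.1) volume τ 1 := (II2 hu).mono_set (uIcc_sub_right h0 h1)
  have m3 : IntervalIntegrable (fun t => (u t).2.2) volume 0 τ := (II3 hu).mono_set (uIcc_sub_left h0 h1)
  have m3' : IntervalIntegrable (fun t => (u t).2.2) volume τ 1 := (II3 hu).mono_set (uIcc_sub_right h0 h1)
  have ma : IntervalIntegrable (aInt u) volume 0 τ := (aInt_II hu).mono_set (uIcc_sub_left h0 h1)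
  have ma' : IntervalIntegrable (aInt u) volume τ 1 := (aInt_II hu).mono_set (uIcc_sub_right h0 h1)
  -- component integrals of sp1
  have i1 : ∫ t in (0:ℝ)..1, (sp1 τ u t).1 = P1 u τ := by
    have h := P1_sp1 (τ := τ) (u := u) 1
    rwa [mul_one] at h
  have i2 : ∫ t in (0:ℝ)..1, (sp1 τ u t).2.1 = P2 u τ := by
    have h := P2_sp1 (τ := τ) (u := u) 1
    rwa [mul_one] at h
  have i3 : ∫ t in (0:ℝ)..1, (sp1 τ u t).2.2 = ∫ t in (0:ℝ)..τ, (u t).2.2 := by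
    rw [sp1_eq]
    show (∫ s in (0:ℝ)..1, τ * (u (τ*s)).2.2) = _
    have h := spR1_int (fun r => (u r).2.2) τ 1
    rwa [mul_one] at h
  -- component integrals of sp2
  have j1 : ∫ t in (0:ℝ)..1, (sp2 τ u t).1 = ∫ t in τ..1, (u t).1 := by
    rw [sp2_eq]
    show (∫ s in (0:ℝ)..1, (1-τ) * (u (τ+(1-τ)*s)).1) = _
    have h := spR2_int (fun r => (u r).1) τ 1
    rwa [mul_one, show τ + (1-τ) = 1 by ring] at h
  have j2 : ∫ t in (0:ℝ)..1, (sp2 τ u t).2.1 = ∫ t in τ..1, (u t).2.1 := by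
    rw [sp2_eq]
    show (∫ s in (0:ℝ)..1, (1-τ) * (u (τ+(1-τ)*s)).2.1) = _
    have h := spR2_int (fun r => (u r).2.1) τ 1
    rwa [mul_one, show τ + (1-τ) = 1 by ring] at h
  have j3 : ∫ t in (0:ℝ)..1, (sp2 τ u t).2.2 = ∫ t in τ..1, (u t).2.2 := by
    rw [sp2_eq]
    show (∫ s in (0:ℝ)..1, (1-τ) * (u (τ+(1-τ)*s)).2.2) = _
    have h := spR2_int (fun r => (u r).2.2) τ 1
    rwa [mul_one, show τ + (1-τ) = 1 by ring] at h
  have ja : ∫ t in (0:ℝ)..1, aInt (sp2 τ u) t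
      = (∫ s in τ..1, aInt u s) - P1 u τ * (∫ s in τ..1, (u s).2.1)
        + P2 u τ * ∫ s in τ..1, (u s).1 := by
    rw [Ia_sp2 hu h0 h1]
    rw [intervalIntegral.integral_add (ma'.sub (m2'.const_mul _)) (m1'.const_mul _),
      intervalIntegral.integral_sub ma' (m2'.const_mul _),
      intervalIntegral.integral_const_mul, intervalIntegral.integral_const_mul]
  -- splitting of u integrals
  have s1 : (P1 u τ) + ∫ t in τ..1, (u t).1 = ∫ t in (0:ℝ)..1, (u t).1 :=
    intervalIntegral.integral_add_adjacent_intervals m1 m1'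
  have s2 : (P2 u τ) + ∫ t in τ..1, (u t).2.1 = ∫ t in (0:ℝ)..1, (u t).2.1 :=
    intervalIntegral.integral_add_adjacent_intervals m2 m2'
  have s3 : (∫ t in (0:ℝ)..τ, (u t).2.2) + ∫ t in τ..1, (u t).2.2 = ∫ t in (0:ℝ)..1, (u t).2.2 :=
    intervalIntegral.integral_add_adjacent_intervals m3 m3'
  have sA : (∫ t in (0:ℝ)..τ, aInt u t) + ∫ t in τ..1, aInt u t = ∫ t in (0:ℝ)..1, aInt u t :=
    intervalIntegral.integral_add_adjacent_intervals ma ma'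
  rw [hEndpoint_eq (sp1_II hu h0 h1), hEndpoint_eq (sp2_II hu h0 h1), hEndpoint_eq hu, hmul_def,
    i1, i2, i3, j1, j2, j3, ja, Ia_sp1, ← s1, ← s2, ← s3, ← sA]
  simp only [Prod.ext_iff]
  refine ⟨trivial, trivial, by ring⟩

end S17

namespace S17
open intervalIntegral Real
variable {u v : ℝ → Heis} {τ θ : ℝ}

/-! ### rotation -/

noncomputable def rotH (θ : ℝ) (x : Heis) : Heis :=
  (Real.cos θ * x.1 - Real.sin θ * x.2.1, Real.sin θ * x.1 + Real.cos θ * x.2.1, x.2.2)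

noncomputable def rotC (θ : ℝ) (u : ℝ → Heis) : ℝ → Heis := fun t => rotH θ (u t)

lemma rot_II (hu : IntervalIntegrable u volume 0 1) :
    IntervalIntegrable (rotC θ u) volume 0 1 := by
  have h1 : IntervalIntegrable (fun t => Real.cos θ * (u t).1 - Real.sin θ * (u t).2.1) volume 0 1 :=
    ((II1 hu).const_mul _).sub ((II2 hu).const_mul _)
  have h2 : IntervalIntegrable (fun t => Real.sin θ * (u t).1 + Real.cos θ * (u t).2.1) volume 0 1 :=
    ((II1 hu).const_mul _).add ((II2 hu).const_mul _)
  exact II_mk h1 h2 (II3 hu)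

lemma P1_rot (hu : IntervalIntegrable u volume 0 1) {t : ℝ} (ht : t ∈ Set.Icc (0:ℝ) 1) :
    P1 (rotC θ u) t = Real.cos θ * P1 u t - Real.sin θ * P2 u t := by
  have m1 : IntervalIntegrable (fun s => (u s).1) volume 0 t := (II1 hu).mono_set (uIcc_sub_left ht.1 ht.2)
  have m2 : IntervalIntegrable (fun s => (u s).2.1) volume 0 t := (II2 hu).mono_set (uIcc_sub_left ht.1 ht.2)
  unfold P1 P2 rotC rotH
  rw [intervalIntegral.integral_sub (m1.const_mul _) (m2.const_mul _),
    intervalIntegral.integral_const_mul, intervalIntegral.integral_const_mul]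

lemma P2_rot (hu : IntervalIntegrable u volume 0 1) {t : ℝ} (ht : t ∈ Set.Icc (0:ℝ) 1) :
    P2 (rotC θ u) t = Real.sin θ * P1 u t + Real.cos θ * P2 u t := by
  have m1 : IntervalIntegrable (fun s => (u s).1) volume 0 t := (II1 hu).mono_set (uIcc_sub_left ht.1 ht.2)
  have m2 : IntervalIntegrable (fun s => (u s).2.1) volume 0 t := (II2 hu).mono_set (uIcc_sub_left ht.1 ht.2)
  unfold P1 P2 rotC rotH
  rw [intervalIntegral.integral_add (m1.const_mul _) (m2.const_mul _),
    intervalIntegral.integral_const_mul, intervalIntegral.integral_const_mul]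

lemma aInt_rot (hu : IntervalIntegrable u volume 0 1) {t : ℝ} (ht : t ∈ Set.Icc (0:ℝ) 1) :
    aInt (rotC θ u) t = aInt u t := by
  have hp := Real.sin_sq_add_cos_sq θ
  simp only [aInt, P1_rot hu ht, P2_rot hu ht, rotC, rotH]
  linear_combination (P1 u t * (u t).2.1 - (u t).1 * P2 u t) * hp

lemma hE_rot (hu : IntervalIntegrable u volume 0 1) :
    hEndpoint (rotC θ u) = rotH θ (hEndpoint u) := by
  have e1 : ∫ t in (0:ℝ)..1, (rotC θ u t).1
      = Real.cos θ * (∫ t in (0:ℝ)..1, (u t).1) - Real.sin θ * ∫ t in (0:ℝ)..1, (u t).2.1 := by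
    have h := P1_rot (θ := θ) hu (Set.mem_Icc.2 ⟨zero_le_one, le_rfl⟩)
    exact h
  have e2 : ∫ t in (0:ℝ)..1, (rotC θ u t).2.1
      = Real.sin θ * (∫ t in (0:ℝ)..1, (u t).1) + Real.cos θ * ∫ t in (0:ℝ)..1, (u t).2.1 := by
    have h := P2_rot (θ := θ) hu (Set.mem_Icc.2 ⟨zero_le_one, le_rfl⟩)
    exact h
  have e3 : ∫ t in (0:ℝ)..1, (rotC θ u t).2.2 = ∫ t in (0:ℝ)..1, (u t).2.2 := rfl
  have ea : ∫ t in (0:ℝ)..1, aInt (rotC θ u) t = ∫ t in (0:ℝ)..1, aInt u t := by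
    apply intervalIntegral.integral_congr
    intro t ht
    rw [Set.uIcc_of_le (by norm_num : (0:ℝ) ≤ 1)] at ht
    exact aInt_rot hu ht
  rw [hEndpoint_eq (rot_II hu), hEndpoint_eq hu, e1, e2, e3, ea, rotH]

/-! ### f1 facts -/

lemma f1_smul {r : ℝ} (hr : 0 ≤ r) (x : Heis) : f1 (r • x) = r * f1 x := by
  have h1 : (r • x).1 = r * x.1 := by simp [smul_eq_mul]
  have h2 : (r • x).2.1 = r * x.2.1 := by simp [smul_eq_mul]
  rw [f1, f1, h1, h2, show (r*x.1)^2 + (r*x.2.1)^2 = r^2 * (x.1^2 + x.2.1^2) by ring,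
    Real.sqrt_mul (sq_nonneg r), Real.sqrt_sq hr]

lemma f1_rot (θ : ℝ) (x : Heis) : f1 (rotH θ x) = f1 x := by
  have hp := Real.sin_sq_add_cos_sq θ
  rw [f1, f1, rotH]
  congr 1
  dsimp only
  linear_combination (x.1^2 + x.2.1^2) * hp

lemma len_cat (hu : IntervalIntegrable u volume 0 1) (hv : IntervalIntegrable v volume 0 1) :
    ∫ t in (0:ℝ)..1, f1 (cat u v t)
      = (∫ t in (0:ℝ)..1, f1 (u t)) + ∫ t in (0:ℝ)..1, f1 (v t) := by
  have h : (fun t => f1 (cat u v t)) = catR (fun s => f1 (u s)) (fun s => f1 (v s)) := by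
    funext t
    unfold cat catR
    split_ifs
    · rw [f1_smul (by norm_num : (0:ℝ) ≤ 2)]
    · rw [f1_smul (by norm_num : (0:ℝ) ≤ 2)]
  rw [h]
  exact catR_int (f1_II hu) (f1_II hv)

lemma len_sp (hu : IntervalIntegrable u volume 0 1) (h0 : 0 ≤ τ) (h1 : τ ≤ 1) :
    (∫ t in (0:ℝ)..1, f1 (sp1 τ u t)) + (∫ t in (0:ℝ)..1, f1 (sp2 τ u t))
      = ∫ t in (0:ℝ)..1, f1 (u t) := by
  have e1 : (fun t => f1 (sp1 τ u t)) = fun t => τ * f1 (u (τ*t)) := by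
    funext t; rw [sp1, f1_smul h0]
  have e2 : (fun t => f1 (sp2 τ u t)) = fun t => (1-τ) * f1 (u (τ+(1-τ)*t)) := by
    funext t; rw [sp2, f1_smul (by linarith : (0:ℝ) ≤ 1-τ)]
  rw [e1, e2]
  have c1 := spR1_int (fun r => f1 (u r)) τ 1
  have c2 := spR2_int (fun r => f1 (u r)) τ 1
  rw [mul_one] at c1
  rw [mul_one, show τ + (1-τ) = 1 by ring] at c2
  rw [c1, c2]
  exact intervalIntegral.integral_add_adjacent_intervals
    ((f1_II hu).mono_set (uIcc_sub_left h0 h1)) ((f1_II hu).mono_set (uIcc_sub_right h0 h1))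

lemma len_rot : ∫ t in (0:ℝ)..1, f1 (rotC θ u t) = ∫ t in (0:ℝ)..1, f1 (u t) := by
  apply intervalIntegral.integral_congr
  intro t _
  exact f1_rot θ (u t)

end S17

namespace S17
open intervalIntegral Real

/-! ### constant (segment) control -/

noncomputable def constC (x y : ℝ) : ℝ → Heis := fun _ => (x, y, 0)

lemma constC_II (x y : ℝ) : IntervalIntegrable (constC x y) volume 0 1 :=
  intervalIntegrable_const

lemma P1_const (x y t : ℝ) : P1 (constC x y) t = t * x := by
  unfold P1 constC
  rw [intervalIntegral.integral_const]
  simp [smul_eq_mul]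

lemma P2_const (x y t : ℝ) : P2 (constC x y) t = t * y := by
  unfold P2 constC
  rw [intervalIntegral.integral_const]
  simp [smul_eq_mul]

lemma hE_const (x y : ℝ) : hEndpoint (constC x y) = (x, y, 0) := by
  have ea : ∫ t in (0:ℝ)..1, aInt (constC x y) t = 0 := by
    have h : (fun t => aInt (constC x y) t) = fun _ => (0:ℝ) := by
      funext t
      simp only [aInt, P1_const, P2_const, constC]
      ring
    rw [h, intervalIntegral.integral_const]
    simp
  rw [hEndpoint_eq (constC_II x y), ea]
  unfold constC
  simp

lemma len_const (x y : ℝ) :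
    ∫ t in (0:ℝ)..1, f1 (constC x y t) = Real.sqrt (x^2 + y^2) := by
  unfold constC f1
  rw [intervalIntegral.integral_const]
  simp

/-! ### circular arc control -/

noncomputable def arcC (R β α : ℝ) : ℝ → Heis :=
  fun t => (-(R*α*Real.sin (β+α*t)), R*α*Real.cos (β+α*t), 0)

lemma arcC_cont (R β α : ℝ) : Continuous (arcC R β α) := by
  unfold arcC
  fun_prop

lemma arcC_II (R β α : ℝ) : IntervalIntegrable (arcC R β α) volume 0 1 :=
  (arcC_cont R β α).intervalIntegrable 0 1

lemma hasDerivAt_inner (β α s : ℝ) : HasDerivAt (fun r => β + α*r) α s := by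
  simpa using (hasDerivAt_id s).const_mul α |>.const_add β

lemma hasDerivAt_Rcos (R β α s : ℝ) :
    HasDerivAt (fun r => R * Real.cos (β+α*r)) (-(R*α*Real.sin (β+α*s))) s := by
  have h := ((Real.hasDerivAt_cos (β+α*s)).comp s (hasDerivAt_inner β α s)).const_mul R
  exact h.congr_deriv (by ring)

lemma hasDerivAt_Rsin (R β α s : ℝ) :
    HasDerivAt (fun r => R * Real.sin (β+α*r)) (R*α*Real.cos (β+α*s)) s := by
  have h := ((Real.hasDerivAt_sin (β+α*s)).comp s (hasDerivAt_inner β α s)).const_mul R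
  exact h.congr_deriv (by ring)

lemma P1_arc (R β α : ℝ) (t : ℝ) :
    P1 (arcC R β α) t = R * Real.cos (β+α*t) - R * Real.cos β := by
  unfold P1 arcC
  have h := intervalIntegral.integral_eq_sub_of_hasDerivAt
    (f := fun r => R * Real.cos (β+α*r)) (f' := fun s => -(R*α*Real.sin (β+α*s)))
    (a := (0:ℝ)) (b := t) (fun s _ => hasDerivAt_Rcos R β α s)
    ((by fun_prop : Continuous fun s : ℝ => -(R*α*Real.sin (β+α*s))).intervalIntegrable 0 t)
  show (∫ s in (0:ℝ)..t, -(R*α*Real.sin (β+α*s))) = _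
  rw [h]
  simp

lemma P2_arc (R β α : ℝ) (t : ℝ) :
    P2 (arcC R β α) t = R * Real.sin (β+α*t) - R * Real.sin β := by
  unfold P2 arcC
  have h := intervalIntegral.integral_eq_sub_of_hasDerivAt
    (f := fun r => R * Real.sin (β+α*r)) (f' := fun s => R*α*Real.cos (β+α*s))
    (a := (0:ℝ)) (b := t) (fun s _ => hasDerivAt_Rsin R β α s)
    ((by fun_prop : Continuous fun s : ℝ => R*α*Real.cos (β+α*s)).intervalIntegrable 0 t)
  show (∫ s in (0:ℝ)..t, R*α*Real.cos (β+α*s)) = _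
  rw [h]
  simp

lemma aInt_arc (R β α : ℝ) (t : ℝ) :
    aInt (arcC R β α) t = R^2*α - R^2*α*(Real.cos β * Real.cos (β+α*t)
      + Real.sin β * Real.sin (β+α*t)) := by
  have hp := Real.sin_sq_add_cos_sq (β+α*t)
  simp only [aInt, P1_arc, P2_arc, arcC]
  linear_combination (R^2*α) * hp

lemma Ia_arc (R β α : ℝ) :
    ∫ t in (0:ℝ)..1, aInt (arcC R β α) t = R^2*α - R^2*Real.sin α := by
  have hG : ∀ s ∈ Set.uIcc (0:ℝ) 1, HasDerivAt
      (fun t => R^2*α*t - R^2*(Real.cos β * Real.sin (β+α*t) - Real.sin β * Real.cos (β+α*t)))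
      (aInt (arcC R β α) s) s := by
    intro s _
    have h1 : HasDerivAt (fun t : ℝ => R^2*α*t) (R^2*α) s := by
      simpa using (hasDerivAt_id s).const_mul (R^2*α)
    have h2 := (hasDerivAt_Rsin (R^2 * Real.cos β) β α s)
    have h3 := (hasDerivAt_Rcos (R^2 * Real.sin β) β α s)
    have h4 := (h1.sub (h2.sub h3))
    have : HasDerivAt (fun t => R^2*α*t - (R^2*Real.cos β * Real.sin (β+α*t)
        - R^2*Real.sin β * Real.cos (β+α*t)))
        (R^2*α - ((R^2*Real.cos β)*α*Real.cos (β+α*s) - -((R^2*Real.sin β)*α*Real.sin (β+α*s)))) s := by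
      exact h4
    have e := aInt_arc R β α s
    convert this using 1
    · funext t; ring
    · rw [e]; ring
  have hint : IntervalIntegrable (fun s => aInt (arcC R β α) s) volume 0 1 := aInt_II (arcC_II R β α)
  have h := intervalIntegral.integral_eq_sub_of_hasDerivAt hG hint
  rw [h]
  have hs : Real.cos β * Real.sin (β+α*1) - Real.sin β * Real.cos (β+α*1) = Real.sin α := by
    rw [show β + α*1 = (β + α) by ring]
    rw [Real.sin_add, Real.cos_add]
    have hp := Real.sin_sq_add_cos_sq β
    linear_combination Real.sin α * hp
  rw [hs, show β + α*0 = β by ring]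
  ring

lemma hE_arc (R β α : ℝ) : hEndpoint (arcC R β α)
    = (R * Real.cos (β+α) - R * Real.cos β, R * Real.sin (β+α) - R * Real.sin β,
        2⁻¹*(R^2*α - R^2*Real.sin α)) := by
  have e1 : ∫ t in (0:ℝ)..1, (arcC R β α t).1 = R * Real.cos (β+α) - R * Real.cos β := by
    have h := P1_arc R β α 1
    rw [mul_one] at h
    exact h
  have e2 : ∫ t in (0:ℝ)..1, (arcC R β α t).2.1 = R * Real.sin (β+α) - R * Real.sin β := by
    have h := P2_arc R β α 1
    rw [mul_one] at h
    exact h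
  have e3 : ∫ t in (0:ℝ)..1, (arcC R β α t).2.2 = 0 := by
    show (∫ t in (0:ℝ)..1, (0:ℝ)) = 0
    simp
  rw [hEndpoint_eq (arcC_II R β α), e1, e2, e3, Ia_arc]
  simp

lemma len_arc (R β α : ℝ) :
    ∫ t in (0:ℝ)..1, f1 (arcC R β α t) = |R*α| := by
  have h : (fun t => f1 (arcC R β α t)) = fun _ => |R*α| := by
    funext t
    have hp := Real.sin_sq_add_cos_sq (β+α*t)
    unfold f1 arcC
    rw [show (-(R*α*Real.sin (β+α*t)))^2 + (R*α*Real.cos (β+α*t))^2 = (R*α)^2 by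
      linear_combination (R*α)^2 * hp]
    exact Real.sqrt_sq_eq_abs _
  rw [h, intervalIntegral.integral_const]
  simp

end S17

namespace S17
open intervalIntegral Real
variable {u v : ℝ → Heis} {τ θ : ℝ}

/-! ### horizontality -/

def Hz (u : ℝ → Heis) : Prop := ∀ t, (u t).2.2 = 0

lemma Hz_cat (h1 : Hz u) (h2 : Hz v) : Hz (cat u v) := by
  intro t
  unfold cat
  split_ifs <;> simp [Prod.smul_snd, smul_eq_mul, h1 _, h2 _]

lemma Hz_sp1 (h1 : Hz u) : Hz (sp1 τ u) := by
  intro t; simp [sp1, Prod.smul_snd, smul_eq_mul, h1 _]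

lemma Hz_sp2 (h1 : Hz u) : Hz (sp2 τ u) := by
  intro t; simp [sp2, Prod.smul_snd, smul_eq_mul, h1 _]

lemma Hz_rot (h1 : Hz u) : Hz (rotC θ u) := by
  intro t; simp [rotC, rotH, h1 _]

lemma Hz_const (x y : ℝ) : Hz (constC x y) := fun _ => rfl

lemma Hz_arc (R β α : ℝ) : Hz (arcC R β α) := fun _ => rfl

/-! ### the central multiplication -/

lemma hmul_vert (x : Heis) (c : ℝ) : hmul x ((0:ℝ), (0:ℝ), c) = (x.1, x.2.1, x.2.2 + c) := by
  rw [hmul_def]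
  norm_num

/-! ### the circle control -/

lemma sqrt4pi (ζ : ℝ) (hζ : 0 ≤ ζ) :
    Real.sqrt (4*Real.pi*ζ) = 2*Real.pi*Real.sqrt (ζ/Real.pi) := by
  have hπ := Real.pi_pos
  rw [show 4*Real.pi*ζ = (2*Real.pi)^2 * (ζ/Real.pi) by field_simp; ring,
    Real.sqrt_mul (sq_nonneg _), Real.sqrt_sq (by positivity)]

lemma circle_ctrl (ζ : ℝ) : ∃ c : ℝ → Heis, IntervalIntegrable c volume 0 1 ∧ Hz c ∧
    hEndpoint c = ((0:ℝ), (0:ℝ), ζ) ∧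
    ∫ t in (0:ℝ)..1, f1 (c t) = Real.sqrt (4*Real.pi*|ζ|) := by
  have hπ := Real.pi_pos
  set R := Real.sqrt (|ζ|/Real.pi) with hR
  have hR0 : 0 ≤ R := Real.sqrt_nonneg _
  have hRsq : R^2 = |ζ|/Real.pi := Real.sq_sqrt (by positivity)
  set α := if 0 ≤ ζ then (2*Real.pi) else (-(2*Real.pi)) with hα
  refine ⟨arcC R 0 α, arcC_II R 0 α, Hz_arc R 0 α, ?_, ?_⟩
  · rw [hE_arc]
    have hcos : Real.cos (0+α) = 1 := by
      rw [zero_add, hα]; split_ifs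
      · exact Real.cos_two_pi
      · rw [Real.cos_neg]; exact Real.cos_two_pi
    have hsin : Real.sin (0+α) = 0 := by
      rw [zero_add, hα]; split_ifs
      · exact Real.sin_two_pi
      · rw [Real.sin_neg, Real.sin_two_pi, neg_zero]
    have hval : 2⁻¹*(R^2*α - R^2*Real.sin α) = ζ := by
      have hsα : Real.sin α = 0 := by rw [← zero_add α]; exact hsin
      rw [hsα, mul_zero, sub_zero, hRsq, hα]
      split_ifs with hsgn
      · rw [abs_of_nonneg hsgn]; field_simp
      · rw [abs_of_neg (not_le.1 hsgn)]; field_simp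
    rw [hcos, hsin, Real.cos_zero, Real.sin_zero, hval]
    norm_num
  · rw [len_arc]
    rw [abs_mul, abs_of_nonneg hR0, sqrt4pi |ζ| (abs_nonneg ζ)]
    have : |α| = 2*Real.pi := by
      rw [hα]; split_ifs
      · exact abs_of_nonneg (by positivity)
      · rw [abs_neg]; exact abs_of_nonneg (by positivity)
    rw [this]; ring

/-! ### reaching an arbitrary point -/

lemma reach (x y ζ : ℝ) : ∃ c : ℝ → Heis, IntervalIntegrable c volume 0 1 ∧ Hz c ∧
    hEndpoint c = ((x, y, ζ) : Heis) ∧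
    ∫ t in (0:ℝ)..1, f1 (c t) = Real.sqrt (x^2+y^2) + Real.sqrt (4*Real.pi*|ζ|) := by
  obtain ⟨c, hcII, hcHz, hcE, hcL⟩ := circle_ctrl ζ
  refine ⟨cat (constC x y) c, cat_II (constC_II x y) hcII, Hz_cat (Hz_const x y) hcHz, ?_, ?_⟩
  · rw [cat_hE (constC_II x y) hcII, hE_const, hcE, hmul_vert]
    norm_num
  · rw [len_cat (constC_II x y) hcII, len_const, hcL]

end S17

namespace S17
open intervalIntegral Real
variable {u v : ℝ → Heis} {τ θ : ℝ}

/-! ### the sub-Riemannian distance from an endpoint -/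

noncomputable def dH0 (T : Heis) : ℝ :=
  sInf {l : ℝ | ∃ u : ℝ → Heis, IntervalIntegrable u volume 0 1 ∧
    (∀ᵐ t ∂(volume.restrict (Set.Icc (0:ℝ) 1)), (u t).2.2 = 0) ∧
    hEndpoint u = T ∧
    l = ∫ t in (0:ℝ)..1, Real.sqrt ((u t).1 ^ 2 + (u t).2.1 ^ 2)}

lemma dH0_set_nonneg (T : Heis) : ∀ l ∈ {l : ℝ | ∃ u : ℝ → Heis,
    IntervalIntegrable u volume 0 1 ∧
    (∀ᵐ t ∂(volume.restrict (Set.Icc (0:ℝ) 1)), (u t).2.2 = 0) ∧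
    hEndpoint u = T ∧
    l = ∫ t in (0:ℝ)..1, Real.sqrt ((u t).1 ^ 2 + (u t).2.1 ^ 2)}, 0 ≤ l := by
  rintro l ⟨u, _, _, _, rfl⟩
  exact intervalIntegral.integral_nonneg (by norm_num) (fun t _ => Real.sqrt_nonneg _)

lemma dH0_bddBelow (T : Heis) : BddBelow {l : ℝ | ∃ u : ℝ → Heis,
    IntervalIntegrable u volume 0 1 ∧
    (∀ᵐ t ∂(volume.restrict (Set.Icc (0:ℝ) 1)), (u t).2.2 = 0) ∧
    hEndpoint u = T ∧
    l = ∫ t in (0:ℝ)..1, Real.sqrt ((u t).1 ^ 2 + (u t).2.1 ^ 2)} :=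
  ⟨0, dH0_set_nonneg T⟩

lemma dH0_le {T : Heis} {u : ℝ → Heis} (hu : IntervalIntegrable u volume 0 1)
    (hz : Hz u) (he : hEndpoint u = T) :
    dH0 T ≤ ∫ t in (0:ℝ)..1, f1 (u t) :=
  csInf_le (dH0_bddBelow T) ⟨u, hu, ae_of_all _ hz, he, rfl⟩

lemma dH0_nonneg (T : Heis) : 0 ≤ dH0 T := by
  apply le_csInf
  · obtain ⟨c, hcII, hcHz, hcE, _⟩ := reach T.1 T.2.1 T.2.2
    exact ⟨_, c, hcII, ae_of_all _ hcHz, hcE, rfl⟩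
  · exact dH0_set_nonneg T

/-! ### planar components of split endpoints -/

lemma hE_planar (hu : IntervalIntegrable u volume 0 1) :
    (hEndpoint u).1 = P1 u 1 ∧ (hEndpoint u).2.1 = P2 u 1 := by
  rw [hEndpoint_eq hu]
  exact ⟨rfl, rfl⟩

lemma hE_sp1_planar (hu : IntervalIntegrable u volume 0 1) (h0 : 0 ≤ τ) (h1 : τ ≤ 1) :
    (hEndpoint (sp1 τ u)).1 = P1 u τ ∧ (hEndpoint (sp1 τ u)).2.1 = P2 u τ := by
  obtain ⟨a, b⟩ := hE_planar (sp1_II hu h0 h1)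
  have e1 := P1_sp1 (τ := τ) (u := u) 1
  have e2 := P2_sp1 (τ := τ) (u := u) 1
  rw [mul_one] at e1 e2
  exact ⟨a.trans e1, b.trans e2⟩

/-! ### cross product bound -/

lemma cross_le (a1 a2 b1 b2 : ℝ) :
    |a1*b2 - b1*a2| ≤ Real.sqrt (a1^2+a2^2) * Real.sqrt (b1^2+b2^2) := by
  have h1 : (a1*b2 - b1*a2)^2 ≤ (a1^2+a2^2) * (b1^2+b2^2) := by
    nlinarith [sq_nonneg (a1*b1 + a2*b2)]
  calc |a1*b2 - b1*a2| = Real.sqrt ((a1*b2 - b1*a2)^2) := (Real.sqrt_sq_eq_abs _).symm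
    _ ≤ Real.sqrt ((a1^2+a2^2) * (b1^2+b2^2)) := Real.sqrt_le_sqrt h1
    _ = Real.sqrt (a1^2+a2^2) * Real.sqrt (b1^2+b2^2) := Real.sqrt_mul (by positivity) _

end S17

namespace S17
open intervalIntegral Real
variable {τ θ : ℝ}

set_option maxHeartbeats 2000000 in
lemma key {T : Heis} {u : ℝ → Heis} (hu : IntervalIntegrable u volume 0 1)
    (hend : hEndpoint u = T) (hbig : 100 ≤ dH0 T) :
    dH0 T ≤ (∫ t in (0:ℝ)..1, f1 (u t)) + ∫ t in (0:ℝ)..1, |(u t).2.2| := by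
  have hπ4 : Real.pi < 3.15 := Real.pi_lt_d2
  have hπ3 : 3 < Real.pi := Real.pi_gt_three
  set ℓ := ∫ t in (0:ℝ)..1, f1 (u t) with hℓdef
  set A := ∫ t in (0:ℝ)..1, |(u t).2.2| with hAdef
  set h := ∫ t in (0:ℝ)..1, (u t).2.2 with hhdef
  set w1 := ∫ t in (0:ℝ)..1, (u t).1 with hw1def
  set w2 := ∫ t in (0:ℝ)..1, (u t).2.1 with hw2def
  set z := 2⁻¹ * ∫ t in (0:ℝ)..1, aInt u t with hzdef
  set v : ℝ → Heis := fun t => ((u t).1, (u t).2.1, (0:ℝ)) with hvdef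
  have hvII : IntervalIntegrable v volume 0 1 := II_mk (II1 hu) (II2 hu) intervalIntegrable_const
  have hvHz : Hz v := fun t => rfl
  have hA0 : 0 ≤ A := by
    rw [hAdef]
    exact intervalIntegral.integral_nonneg (by norm_num) (fun t _ => abs_nonneg _)
  have hℓ0 : 0 ≤ ℓ := by
    rw [hℓdef]
    exact intervalIntegral.integral_nonneg (by norm_num) (fun t _ => Real.sqrt_nonneg _)
  have hhA : |h| ≤ A := by
    rw [hhdef, hAdef]
    exact intervalIntegral.abs_integral_le_integral_abs (by norm_num)
  have hvE : hEndpoint v = (w1, w2, z) := by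
    rw [hEndpoint_eq hvII]
    refine Prod.ext rfl (Prod.ext rfl ?_)
    show (∫ t in (0:ℝ)..1, (0:ℝ)) + 2⁻¹ * (∫ t in (0:ℝ)..1, aInt u t) = z
    rw [hzdef]
    simp
  have hT : T = (w1, w2, z + h) := by
    rw [← hend, hEndpoint_eq hu]
    refine Prod.ext rfl (Prod.ext rfl ?_)
    show (∫ t in (0:ℝ)..1, (u t).2.2) + 2⁻¹ * (∫ t in (0:ℝ)..1, aInt u t) = z + h
    rw [hzdef, hhdef]
    ring
  have hvlen : ∫ t in (0:ℝ)..1, f1 (v t) = ℓ := by rw [hℓdef]; rfl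
  by_cases hc : Real.sqrt (4*Real.pi*|h|) ≤ A
  · -- append a circle
    obtain ⟨c, hcII, hcHz, hcE, hcL⟩ := circle_ctrl h
    have hWE : hEndpoint (cat v c) = T := by
      rw [cat_hE hvII hcII, hvE, hcE, hmul_vert, hT]
    calc dH0 T ≤ ∫ t in (0:ℝ)..1, f1 (cat v c t) :=
          dH0_le (cat_II hvII hcII) (Hz_cat hvHz hcHz) hWE
      _ = ℓ + Real.sqrt (4*Real.pi*|h|) := by rw [len_cat hvII hcII, hcL, hvlen]
      _ ≤ ℓ + A := by linarith
  · push_neg at hc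
    have hh4 : |h| ≤ 4*Real.pi := by
      rcases eq_or_lt_of_le (abs_nonneg h) with h0 | h0
      · rw [← h0]; linarith
      · by_contra hcon
        push_neg at hcon
        have h1 : |h| < Real.sqrt (4*Real.pi*|h|) := by linarith
        have h2 : 4*Real.pi*|h| ≤ |h|^2 := by nlinarith
        have h3 : Real.sqrt (4*Real.pi*|h|) ≤ |h| := by
          calc Real.sqrt (4*Real.pi*|h|) ≤ Real.sqrt (|h|^2) := Real.sqrt_le_sqrt h2
            _ = |h| := Real.sqrt_sq (abs_nonneg h)
        linarith
    by_cases hex : ∃ τ ∈ Set.Icc (0:ℝ) 1, 4 ≤ (P1 u τ)^2 + (P2 u τ)^2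
    · obtain ⟨τ, hτ, hτ4⟩ := hex
      have h0 : 0 ≤ τ := hτ.1
      have h1 : τ ≤ 1 := hτ.2
      set c1 := P1 u τ with hc1def
      set c2 := P2 u τ with hc2def
      set R := Real.sqrt (c1^2 + c2^2) with hRdef
      have hRsq : R^2 = c1^2 + c2^2 := Real.sq_sqrt (by positivity)
      have hR2 : 2 ≤ R := by
        rw [hRdef]
        calc (2:ℝ) = Real.sqrt (2^2) := (Real.sqrt_sq (by norm_num)).symm
          _ ≤ Real.sqrt (c1^2+c2^2) := Real.sqrt_le_sqrt (by norm_num at hτ4 ⊢; linarith)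
      have hR0 : (0:ℝ) < R := by linarith
      set ζc : ℂ := ⟨c1, c2⟩ with hζdef
      have hζ0 : ζc ≠ 0 := by
        intro hzz
        have e1 : c1 = 0 := congrArg Complex.re hzz
        have e2 : c2 = 0 := congrArg Complex.im hzz
        rw [e1, e2] at hRsq
        nlinarith
      have habs : ‖ζc‖ = R := by
        rw [Complex.norm_def, hζdef, Complex.normSq_mk, hRdef]
        congr 1
        ring
      set β := Complex.arg ζc with hβdef
      have hc1R : c1 = R * Real.cos β := by
        rw [hβdef, Complex.cos_arg hζ0, habs]
        field_simp [hζdef]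
        rfl
      have hc2R : c2 = R * Real.sin β := by
        rw [hβdef, Complex.sin_arg, habs]
        field_simp [hζdef]
        rfl
      set α := -(2*h)/R^2 with hαdef
      have hRα : R^2 * α = -(2*h) := by
        rw [hαdef]
        field_simp
      have hsp := sp_hE (τ := τ) hvII h0 h1
      rw [hvE] at hsp
      have hp1 : (hEndpoint (sp1 τ v)).1 = c1 := by
        rw [(hE_sp1_planar hvII h0 h1).1]
        rfl
      have hp2 : (hEndpoint (sp1 τ v)).2.1 = c2 := by
        rw [(hE_sp1_planar hvII h0 h1).2]
        rfl
      rw [hmul_def, Prod.mk.injEq, Prod.mk.injEq] at hsp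
      obtain ⟨hs1, hs2, hs3⟩ := hsp
      rw [hp1] at hs1 hs3
      rw [hp2] at hs2 hs3
      have harcE := hE_arc R (β+α) (-α)
      rw [show (β+α) + -α = β by ring] at harcE
      have hsp1II := sp1_II (τ := τ) hvII h0 h1
      have hsp2II := sp2_II (τ := τ) hvII h0 h1
      have hpyth := Real.sin_sq_add_cos_sq β
      have hXA : hmul (rotH α (hEndpoint (sp1 τ v))) (hEndpoint (arcC R (β+α) (-α)))
          = (c1, c2, (hEndpoint (sp1 τ v)).2.2 + h) := by
        rw [harcE, hmul_def]
        simp only [rotH]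
        rw [hp1, hp2]
        refine Prod.ext ?_ (Prod.ext ?_ ?_)
        · show Real.cos α * c1 - Real.sin α * c2 + (R*Real.cos β - R*Real.cos (β+α)) = c1
          rw [hc1R, hc2R, Real.cos_add]
          ring
        · show Real.sin α * c1 + Real.cos α * c2 + (R*Real.sin β - R*Real.sin (β+α)) = c2
          rw [hc1R, hc2R, Real.sin_add]
          ring
        · show (hEndpoint (sp1 τ v)).2.2 + 2⁻¹*(R^2*(-α) - R^2*Real.sin (-α))
            + 2⁻¹*((Real.cos α * c1 - Real.sin α * c2) * (R*Real.sin β - R*Real.sin (β+α))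
              - (R*Real.cos β - R*Real.cos (β+α)) * (Real.sin α * c1 + Real.cos α * c2))
            = (hEndpoint (sp1 τ v)).2.2 + h
          rw [hc1R, hc2R, Real.sin_neg, Real.cos_add, Real.sin_add]
          linear_combination (-(1:ℝ)/2) * hRα + (-(1:ℝ)/2*R^2*Real.sin α) * hpyth
      have hWII : IntervalIntegrable (cat (cat (rotC α (sp1 τ v)) (arcC R (β+α) (-α))) (sp2 τ v)) volume 0 1 :=
        cat_II (cat_II (rot_II hsp1II) (arcC_II _ _ _)) hsp2II
      have hWHz : Hz (cat (cat (rotC α (sp1 τ v)) (arcC R (β+α) (-α))) (sp2 τ v)) :=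
        Hz_cat (Hz_cat (Hz_rot (Hz_sp1 hvHz)) (Hz_arc _ _ _)) (Hz_sp2 hvHz)
      have hWE : hEndpoint (cat (cat (rotC α (sp1 τ v)) (arcC R (β+α) (-α))) (sp2 τ v)) = T := by
        rw [cat_hE (cat_II (rot_II hsp1II) (arcC_II _ _ _)) hsp2II,
          cat_hE (rot_II hsp1II) (arcC_II _ _ _), hE_rot hsp1II, hXA, hmul_def, hT]
        refine Prod.ext ?_ (Prod.ext ?_ ?_)
        · show c1 + (hEndpoint (sp2 τ v)).1 = w1
          exact hs1
        · show c2 + (hEndpoint (sp2 τ v)).2.1 = w2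
          exact hs2
        · show (hEndpoint (sp1 τ v)).2.2 + h + (hEndpoint (sp2 τ v)).2.2
            + 2⁻¹*(c1*(hEndpoint (sp2 τ v)).2.1 - (hEndpoint (sp2 τ v)).1*c2) = z + h
          linear_combination hs3
      have hlen : ∫ t in (0:ℝ)..1, f1 (cat (cat (rotC α (sp1 τ v)) (arcC R (β+α) (-α))) (sp2 τ v) t)
          = ℓ + R*|α| := by
        rw [len_cat (cat_II (rot_II hsp1II) (arcC_II _ _ _)) hsp2II,
          len_cat (rot_II hsp1II) (arcC_II _ _ _), len_rot, len_arc]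
        have hls := len_sp (τ := τ) hvII h0 h1
        rw [hvlen] at hls
        have habs2 : |R*(-α)| = R*|α| := by
          rw [abs_mul, abs_neg, abs_of_pos hR0]
        rw [habs2]
        linarith
      have hRα2 : R*|α| ≤ |h| := by
        have e1 : |α| = 2*|h|/R^2 := by
          rw [hαdef, abs_div, abs_neg, abs_mul, abs_two, abs_of_pos (by positivity : (0:ℝ) < R^2)]
        have e2 : R * (2*|h|/R^2) = 2*|h|/R := by
          field_simp
        rw [e1, e2, div_le_iff₀ hR0]
        nlinarith [abs_nonneg h]
      calc dH0 T ≤ ∫ t in (0:ℝ)..1, f1 (cat (cat (rotC α (sp1 τ v)) (arcC R (β+α) (-α))) (sp2 τ v) t) :=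
            dH0_le hWII hWHz hWE
        _ = ℓ + R*|α| := hlen
        _ ≤ ℓ + A := by linarith [le_trans hRα2 hhA]
    · -- the curve stays within radius 2 : direct reconstruction
      push_neg at hex
      have hw4 : w1^2 + w2^2 < 4 := by
        have h1 := hex 1 (Set.mem_Icc.2 ⟨by norm_num, le_rfl⟩)
        exact h1
      have hsqw : Real.sqrt (w1^2 + w2^2) ≤ 2 := by
        calc Real.sqrt (w1^2+w2^2) ≤ Real.sqrt 4 := Real.sqrt_le_sqrt (le_of_lt hw4)
          _ = 2 := by rw [show (4:ℝ) = 2^2 by norm_num, Real.sqrt_sq (by norm_num)]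
      have hzb : |z| ≤ ℓ := by
        have hb1 : |∫ t in (0:ℝ)..1, aInt u t| ≤ ∫ t in (0:ℝ)..1, |aInt u t| :=
          intervalIntegral.abs_integral_le_integral_abs (by norm_num)
        have hb2 : ∫ t in (0:ℝ)..1, |aInt u t| ≤ ∫ t in (0:ℝ)..1, 2 * f1 (u t) := by
          apply intervalIntegral.integral_mono_on (by norm_num) (aInt_II hu).abs
            ((f1_II hu).const_mul 2)
          intro t ht
          have hcr := cross_le (P1 u t) (P2 u t) ((u t).1) ((u t).2.1)
          have hP2 : Real.sqrt ((P1 u t)^2 + (P2 u t)^2) ≤ 2 := by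
            calc Real.sqrt ((P1 u t)^2 + (P2 u t)^2) ≤ Real.sqrt 4 :=
                Real.sqrt_le_sqrt (le_of_lt (hex t ht))
              _ = 2 := by rw [show (4:ℝ) = 2^2 by norm_num, Real.sqrt_sq (by norm_num)]
          calc |aInt u t| ≤ Real.sqrt ((P1 u t)^2 + (P2 u t)^2)
                * Real.sqrt ((u t).1^2 + (u t).2.1^2) := hcr
            _ ≤ 2 * Real.sqrt ((u t).1^2 + (u t).2.1^2) := by
                apply mul_le_mul_of_nonneg_right hP2 (Real.sqrt_nonneg _)
            _ = 2 * f1 (u t) := rfl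
        have hb3 : ∫ t in (0:ℝ)..1, 2 * f1 (u t) = 2 * ℓ := by
          rw [intervalIntegral.integral_const_mul, hℓdef]
        rw [hb3] at hb2
        rw [hzdef, abs_mul, abs_of_nonneg (by norm_num : (0:ℝ) ≤ (2:ℝ)⁻¹)]
        linarith
      obtain ⟨c, hcII, hcHz, hcE, hcL⟩ := reach w1 w2 (z+h)
      have hd : dH0 T ≤ Real.sqrt (w1^2+w2^2) + Real.sqrt (4*Real.pi*|z+h|) := by
        rw [← hcL]
        exact dH0_le hcII hcHz (by rw [hcE, hT])
      have hzh : |z+h| ≤ ℓ + 4*Real.pi := by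
        calc |z+h| ≤ |z| + |h| := abs_add_le z h
          _ ≤ ℓ + 4*Real.pi := by linarith
      by_cases hl : 25 ≤ ℓ
      · have b1 : 4*Real.pi*|z+h| ≤ 20*ℓ := by nlinarith [abs_nonneg (z+h)]
        have b2 : Real.sqrt (4*Real.pi*|z+h|) ≤ Real.sqrt (20*ℓ) := Real.sqrt_le_sqrt b1
        have b3 : Real.sqrt (20*ℓ) ≤ 0.9*ℓ := by
          calc Real.sqrt (20*ℓ) ≤ Real.sqrt ((0.9*ℓ)^2) := Real.sqrt_le_sqrt (by nlinarith)
            _ = 0.9*ℓ := Real.sqrt_sq (by linarith)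
        linarith
      · push_neg at hl
        have b1 : 4*Real.pi*|z+h| ≤ 484 := by nlinarith [abs_nonneg (z+h)]
        have b2 : Real.sqrt (4*Real.pi*|z+h|) ≤ 22 := by
          calc Real.sqrt (4*Real.pi*|z+h|) ≤ Real.sqrt 484 := Real.sqrt_le_sqrt b1
            _ = 22 := by rw [show (484:ℝ) = 22^2 by norm_num, Real.sqrt_sq (by norm_num)]
        linarith

end S17


open S17 in
set_option maxHeartbeats 1000000 in
/-- for the `ℓ¹`-type norm `‖u‖ = √(u₁²+u₂²) + |u₃|`, there is `r₀ > 0`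
such that `d_F(p,q) = d(p,q)` whenever `d(p,q) ≥ r₀`. -/
theorem stmt_17 :
    ∃ r₀ > (0:ℝ), ∀ p q : Heis, r₀ ≤ dH p q →
      dFin (fun u => Real.sqrt (u.1 ^ 2 + u.2.1 ^ 2) + |u.2.2|) p q = dH p q := by
  refine ⟨100, by norm_num, ?_⟩
  intro p q hr
  have hbig : (100:ℝ) ≤ dH0 (hmul (-p) q) := hr
  have hFnonneg : ∀ l ∈ {l : ℝ | ∃ u : ℝ → Heis, IntervalIntegrable u volume 0 1 ∧
      hEndpoint u = hmul (-p) q ∧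
      l = ∫ t in (0:ℝ)..1, Real.sqrt ((u t).1 ^ 2 + (u t).2.1 ^ 2) + |(u t).2.2|}, 0 ≤ l := by
    rintro l ⟨u, _, _, rfl⟩
    exact intervalIntegral.integral_nonneg (by norm_num)
      (fun t _ => add_nonneg (Real.sqrt_nonneg _) (abs_nonneg _))
  obtain ⟨c, hcII, hcHz, hcE', _⟩ := reach (hmul (-p) q).1 (hmul (-p) q).2.1 (hmul (-p) q).2.2
  have hcE : hEndpoint c = hmul (-p) q := hcE'
  apply le_antisymm
  · -- d_F ≤ d
    apply csInf_le_csInf ⟨0, hFnonneg⟩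
    · exact ⟨_, c, hcII, ae_of_all _ hcHz, hcE, rfl⟩
    · rintro l ⟨u, huII, huHz, huE, rfl⟩
      refine ⟨u, huII, huE, ?_⟩
      apply intervalIntegral.integral_congr_ae
      have hae0 : ∀ᵐ t ∂(volume : Measure ℝ), t ∈ Set.Icc (0:ℝ) 1 → (u t).2.2 = 0 :=
        (ae_restrict_iff' measurableSet_Icc).1 huHz
      filter_upwards [hae0] with t ht hmem
      have htIcc : t ∈ Set.Icc (0:ℝ) 1 := by
        rw [Set.uIoc_of_le (by norm_num : (0:ℝ) ≤ 1)] at hmem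
        exact Set.Ioc_subset_Icc_self hmem
      rw [ht htIcc]
      simp
  · -- d ≤ d_F
    apply le_csInf
    · exact ⟨_, c, hcII, hcE, rfl⟩
    · rintro l ⟨u, huII, huE, rfl⟩
      have hsplit : ∫ t in (0:ℝ)..1, (Real.sqrt ((u t).1 ^ 2 + (u t).2.1 ^ 2) + |(u t).2.2|)
          = (∫ t in (0:ℝ)..1, f1 (u t)) + ∫ t in (0:ℝ)..1, |(u t).2.2| :=
        intervalIntegral.integral_add (f1_II huII) (II3 huII).abs
      rw [hsplit]
      exact key huII huE hbig
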